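/- For any N ∈ ℝ with N > 0, ∫₀^∞ ( e^{-x}/(x(1-e^{-Nx})) - 1/(Nx²) + (1/N - 1/2)·e^{-x}/x ) dx = log Γ(1/N) + (1/2 - 1/N) log(1/N) - (1/2) log(2π). -/

import Mathlib

open Real MeasureTheory

open Set Filter

/-- kernel of Binet's first integral -/
noncomputable def bk (t : ℝ) : ℝ := 1 / (Real.exp t - 1) - 1 / t + 1 / 2

lemma mono_aux {f f' : ℝ → ℝ} (hf : ∀ x, HasDerivAt f (f' x) x)
    (hf' : ∀ x ∈ Set.Ici (0:ℝ), 0 ≤ f' x) {t : ℝ} (ht : 0 ≤ t) : f 0 ≤ f t := by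
  have hm : MonotoneOn f (Set.Ici 0) :=
    monotoneOn_of_deriv_nonneg (convex_Ici 0)
      (fun x _ => (hf x).continuousAt.continuousWithinAt)
      (fun x _ => ((hf x).differentiableAt).differentiableWithinAt)
      (fun x hx => by
        rw [(hf x).deriv]
        exact hf' x (interior_subset hx))
  exact hm Set.self_mem_Ici ht ht

lemma n_hasDeriv (x : ℝ) :
    HasDerivAt (fun x : ℝ => (x - 2) * Real.exp x + x + 2) ((x - 1) * Real.exp x + 1) x := by
  have h := (((hasDerivAt_id x).sub_const 2).mul (Real.hasDerivAt_exp x)).add_const 0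
  have h2 := ((((hasDerivAt_id x).sub_const 2).mul (Real.hasDerivAt_exp x)).add
      (hasDerivAt_id x)).add_const 2
  refine h2.congr_deriv ?_
  simp [id]; ring

lemma n'_hasDeriv (x : ℝ) :
    HasDerivAt (fun x : ℝ => (x - 1) * Real.exp x + 1) (x * Real.exp x) x := by
  have h2 := ((((hasDerivAt_id x).sub_const 1).mul (Real.hasDerivAt_exp x))).add_const 1
  refine h2.congr_deriv ?_
  simp [id]; ring

lemma n_nonneg {t : ℝ} (ht : 0 ≤ t) : 0 ≤ (t - 2) * Real.exp t + t + 2 := by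
  have h1 : ∀ x ∈ Set.Ici (0:ℝ), 0 ≤ x * Real.exp x := fun x hx =>
    mul_nonneg hx (Real.exp_pos x).le
  have h2 : ∀ x ∈ Set.Ici (0:ℝ), 0 ≤ (x - 1) * Real.exp x + 1 := by
    intro x hx
    have := mono_aux n'_hasDeriv h1 hx
    simpa using this
  have := mono_aux n_hasDeriv h2 ht
  simpa using this

lemma p_hasDeriv (x : ℝ) :
    HasDerivAt (fun x : ℝ => 2 * x ^ 2 * (Real.exp x - 1) - ((x - 2) * Real.exp x + x + 2))
      (4 * x * (Real.exp x - 1) + 2 * x ^ 2 * Real.exp x - ((x - 1) * Real.exp x + 1)) x := by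
  have h1 : HasDerivAt (fun x : ℝ => 2 * x ^ 2 * (Real.exp x - 1))
      (4 * x * (Real.exp x - 1) + 2 * x ^ 2 * Real.exp x) x := by
    have := (((hasDerivAt_pow 2 x).const_mul 2).mul ((Real.hasDerivAt_exp x).sub_const 1))
    refine this.congr_deriv ?_
    ring
  exact h1.sub (n_hasDeriv x)

lemma p'_hasDeriv (x : ℝ) :
    HasDerivAt (fun x : ℝ =>
        4 * x * (Real.exp x - 1) + 2 * x ^ 2 * Real.exp x - ((x - 1) * Real.exp x + 1))
      (4 * (Real.exp x - 1) + 7 * x * Real.exp x + 2 * x ^ 2 * Real.exp x) x := by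
  have h1 : HasDerivAt (fun x : ℝ => 4 * x * (Real.exp x - 1))
      (4 * (Real.exp x - 1) + 4 * x * Real.exp x) x := by
    have := (((hasDerivAt_id x).const_mul 4).mul ((Real.hasDerivAt_exp x).sub_const 1))
    refine this.congr_deriv ?_
    simp [id]
  have h2 : HasDerivAt (fun x : ℝ => 2 * x ^ 2 * Real.exp x)
      (4 * x * Real.exp x + 2 * x ^ 2 * Real.exp x) x := by
    have := (((hasDerivAt_pow 2 x).const_mul 2).mul (Real.hasDerivAt_exp x))
    refine this.congr_deriv ?_
    ring
  have := (h1.add h2).sub (n'_hasDeriv x)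
  refine this.congr_deriv ?_
  ring

lemma p_nonneg {t : ℝ} (ht : 0 ≤ t) :
    0 ≤ 2 * t ^ 2 * (Real.exp t - 1) - ((t - 2) * Real.exp t + t + 2) := by
  have h1 : ∀ x ∈ Set.Ici (0:ℝ),
      0 ≤ 4 * (Real.exp x - 1) + 7 * x * Real.exp x + 2 * x ^ 2 * Real.exp x := by
    intro x hx
    have e1 : (0:ℝ) ≤ Real.exp x - 1 := by
      have : (1:ℝ) ≤ Real.exp x := Real.one_le_exp hx
      linarith
    have := Real.exp_pos x
    have hx0 : (0:ℝ) ≤ x := hx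
    nlinarith
  have h2 : ∀ x ∈ Set.Ici (0:ℝ),
      0 ≤ 4 * x * (Real.exp x - 1) + 2 * x ^ 2 * Real.exp x - ((x - 1) * Real.exp x + 1) := by
    intro x hx
    have := mono_aux p'_hasDeriv h1 hx
    simpa using this
  have := mono_aux p_hasDeriv h2 ht
  simpa using this

lemma exp_sub_one_pos {t : ℝ} (ht : 0 < t) : 0 < Real.exp t - 1 := by
  simpa using Real.exp_lt_exp.mpr ht

lemma bk_eq {t : ℝ} (ht : 0 < t) :
    bk t = ((t - 2) * Real.exp t + t + 2) / (2 * t * (Real.exp t - 1)) := by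
  have h1 := exp_sub_one_pos ht
  simp only [bk]
  field_simp
  ring

lemma bk_nonneg {t : ℝ} (ht : 0 < t) : 0 ≤ bk t := by
  rw [bk_eq ht]
  have h1 := exp_sub_one_pos ht
  exact div_nonneg (n_nonneg ht.le) (by positivity)

lemma bk_le {t : ℝ} (ht : 0 < t) : bk t ≤ t := by
  have h1 := exp_sub_one_pos ht
  rw [bk_eq ht, div_le_iff₀ (by positivity)]
  nlinarith [p_nonneg ht.le]

lemma integral_exp_neg_mul {z : ℝ} (hz : 0 < z) :
    ∫ t in Ioi (0:ℝ), Real.exp (-(z * t)) = 1 / z := by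
  have := integral_comp_mul_left_Ioi (fun u => Real.exp (-u)) 0 hz
  simp only [mul_zero] at this
  rw [this, integral_exp_neg_Ioi_zero]
  simp [one_div]

lemma bk_contOn : ContinuousOn bk (Ioi (0:ℝ)) := by
  apply ContinuousOn.add
  apply ContinuousOn.sub
  · exact continuousOn_const.div (Real.continuous_exp.continuousOn.sub continuousOn_const)
      (fun t ht => ne_of_gt (exp_sub_one_pos ht))
  · exact continuousOn_const.div continuousOn_id (fun t ht => ne_of_gt ht)
  · exact continuousOn_const

lemma bkF_integrand_contOn (z : ℝ) :
    ContinuousOn (fun t => bk t * Real.exp (-(z * t)) / t) (Ioi (0:ℝ)) := by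
  apply ContinuousOn.div
  · exact bk_contOn.mul (Real.continuous_exp.comp (continuous_const.mul continuous_id).neg).continuousOn
  · exact continuousOn_id
  · exact fun t ht => ne_of_gt ht

lemma bkF_integrand_bound {z t : ℝ} (ht : t ∈ Ioi (0:ℝ)) :
    ‖bk t * Real.exp (-(z * t)) / t‖ ≤ Real.exp (-(z * t)) := by
  have ht' : (0:ℝ) < t := ht
  have hb := bk_nonneg ht'
  have he := Real.exp_pos (-(z * t))
  rw [Real.norm_eq_abs, abs_of_nonneg (by positivity)]
  rw [div_le_iff₀ ht']
  nlinarith [bk_le ht']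

lemma bkF_integrableOn {z : ℝ} (hz : 0 < z) :
    IntegrableOn (fun t => bk t * Real.exp (-(z * t)) / t) (Ioi (0:ℝ)) := by
  apply MeasureTheory.Integrable.mono' ((exp_neg_integrableOn_Ioi 0 hz).congr_fun
      (fun x _ => by beta_reduce; rw [neg_mul]) measurableSet_Ioi)
    ((bkF_integrand_contOn z).aestronglyMeasurable measurableSet_Ioi)
  · filter_upwards [ae_restrict_mem measurableSet_Ioi] with t ht
    exact bkF_integrand_bound ht

noncomputable def bkF (z : ℝ) : ℝ := ∫ t in Ioi (0:ℝ), bk t * Real.exp (-(z * t)) / t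

lemma bkF_nonneg {z : ℝ} (hz : 0 < z) : 0 ≤ bkF z := by
  apply setIntegral_nonneg measurableSet_Ioi
  intro t ht
  have ht' : (0:ℝ) < t := ht
  have := bk_nonneg ht'
  positivity

lemma bkF_le {z : ℝ} (hz : 0 < z) : bkF z ≤ 1 / z := by
  rw [← integral_exp_neg_mul hz]
  apply setIntegral_mono_on (bkF_integrableOn hz)
    (((exp_neg_integrableOn_Ioi 0 hz).congr_fun (fun x _ => by beta_reduce; rw [neg_mul]) measurableSet_Ioi))
    measurableSet_Ioi
  intro t ht
  calc bk t * Real.exp (-(z * t)) / t ≤ ‖bk t * Real.exp (-(z * t)) / t‖ := le_abs_self _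
  _ ≤ _ := bkF_integrand_bound ht

lemma one_sub_exp_neg_le (u : ℝ) : 1 - Real.exp (-u) ≤ u := by
  have := Real.add_one_le_exp (-u)
  linarith

lemma one_sub_exp_neg_nonneg {u : ℝ} (hu : 0 ≤ u) : 0 ≤ 1 - Real.exp (-u) := by
  have : Real.exp (-u) ≤ 1 := Real.exp_le_one_iff.mpr (by linarith)
  linarith

lemma fru_integrand_contOn (a c : ℝ) :
    ContinuousOn (fun t => (Real.exp (-(a * t)) - Real.exp (-(c * t))) / t) (Ioi (0:ℝ)) := by
  apply ContinuousOn.div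
  · exact ((Real.continuous_exp.comp (continuous_const.mul continuous_id).neg).sub
      (Real.continuous_exp.comp (continuous_const.mul continuous_id).neg)).continuousOn
  · exact continuousOn_id
  · exact fun t ht => ne_of_gt ht

lemma fru_integrand_bound {a c t : ℝ} (hac : a ≤ c) (ht : (0:ℝ) < t) :
    ‖(Real.exp (-(a * t)) - Real.exp (-(c * t))) / t‖ ≤ (c - a) * Real.exp (-(a * t)) := by
  have h1 : Real.exp (-(c * t)) ≤ Real.exp (-(a * t)) :=
    Real.exp_le_exp.mpr (by nlinarith)
  have key : Real.exp (-(a * t)) - Real.exp (-(c * t)) ≤ (c - a) * t * Real.exp (-(a * t)) := by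
    have h2 : Real.exp (-(c * t)) = Real.exp (-(a * t)) * Real.exp (-((c - a) * t)) := by
      rw [← Real.exp_add]; ring_nf
    rw [h2]
    have h3 : 1 - Real.exp (-((c - a) * t)) ≤ (c - a) * t := one_sub_exp_neg_le _
    have h4 := Real.exp_pos (-(a * t))
    nlinarith
  rw [Real.norm_eq_abs, abs_div, abs_of_pos ht,
    abs_of_nonneg (by linarith), div_le_iff₀ ht]
  nlinarith

lemma fru_integrableOn {a c : ℝ} (ha : 0 < a) (hac : a ≤ c) :
    IntegrableOn (fun t => (Real.exp (-(a * t)) - Real.exp (-(c * t))) / t) (Ioi (0:ℝ)) := by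
  apply MeasureTheory.Integrable.mono'
    (((exp_neg_integrableOn_Ioi 0 ha).congr_fun (fun x _ => by beta_reduce; rw [neg_mul]) measurableSet_Ioi).const_mul (c - a))
    ((fru_integrand_contOn a c).aestronglyMeasurable measurableSet_Ioi)
  filter_upwards [ae_restrict_mem measurableSet_Ioi] with t ht
  exact fru_integrand_bound hac ht

lemma fru_hasDeriv {a b : ℝ} (ha : 0 < a) (hab : a ≤ b) :
    HasDerivAt (fun c => ∫ t in Ioi (0:ℝ), (Real.exp (-(a * t)) - Real.exp (-(c * t))) / t)
      (1 / b) b := by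
  have hb : 0 < b := lt_of_lt_of_le ha hab
  have hb2 : 0 < b / 2 := by linarith
  have main := hasDerivAt_integral_of_dominated_loc_of_deriv_le (μ := volume.restrict (Ioi (0:ℝ)))
    (F := fun c t => (Real.exp (-(a * t)) - Real.exp (-(c * t))) / t)
    (F' := fun c t => Real.exp (-(c * t))) (x₀ := b) (s := Metric.ball b (b / 2)) (Metric.ball_mem_nhds b hb2)
    (Filter.Eventually.of_forall fun c =>
      ((fru_integrand_contOn a c).aestronglyMeasurable measurableSet_Ioi))
    (fru_integrableOn ha hab)
    ((Real.continuous_exp.comp (continuous_const.mul continuous_id).neg).aestronglyMeasurable.restrict)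
    ?_ (((exp_neg_integrableOn_Ioi 0 hb2).congr_fun (fun x _ => by beta_reduce; rw [neg_mul]) measurableSet_Ioi))
    ?_
  · have := main.2
    rwa [integral_exp_neg_mul hb] at this
  · filter_upwards [ae_restrict_mem measurableSet_Ioi] with t ht
    intro c hc
    have ht' : (0:ℝ) < t := ht
    rw [Metric.mem_ball, Real.dist_eq, abs_lt] at hc
    rw [Real.norm_eq_abs, abs_of_pos (Real.exp_pos _), Real.exp_le_exp]
    nlinarith
  · filter_upwards [ae_restrict_mem measurableSet_Ioi] with t ht
    intro c _
    have ht' : (0:ℝ) < t := ht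
    have h1 : HasDerivAt (fun c : ℝ => Real.exp (-(c * t))) (-t * Real.exp (-(c * t))) c := by
      have := (Real.hasDerivAt_exp (-(c * t))).comp c
        (((hasDerivAt_id c).mul_const t).neg)
      refine this.congr_deriv ?_
      ring
    have h2 := ((h1.const_sub (Real.exp (-(a * t)))).div_const t)
    refine h2.congr_deriv ?_
    field_simp

lemma frullani {a b : ℝ} (ha : 0 < a) (hab : a ≤ b) :
    ∫ t in Ioi (0:ℝ), (Real.exp (-(a * t)) - Real.exp (-(b * t))) / t
      = Real.log b - Real.log a := by
  have hb : 0 < b := lt_of_lt_of_le ha hab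
  have key : ∀ c ∈ Set.uIcc a b, HasDerivAt
      (fun c => ∫ t in Ioi (0:ℝ), (Real.exp (-(a * t)) - Real.exp (-(c * t))) / t) (1 / c) c := by
    intro c hc
    rw [Set.uIcc_of_le hab] at hc
    exact fru_hasDeriv ha hc.1
  have hint : IntervalIntegrable (fun c : ℝ => 1 / c) volume a b := by
    apply ContinuousOn.intervalIntegrable
    apply ContinuousOn.div continuousOn_const continuousOn_id
    intro x hx
    rw [Set.uIcc_of_le hab] at hx
    exact ne_of_gt (lt_of_lt_of_le ha hx.1)
  have := intervalIntegral.integral_eq_sub_of_hasDerivAt key hint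
  rw [integral_one_div (by
    rw [Set.uIcc_of_le hab]; intro h; exact absurd h.1 (not_le.mpr ha))] at this
  have hJa : (∫ t in Ioi (0:ℝ), (Real.exp (-(a * t)) - Real.exp (-(a * t))) / t) = 0 := by
    simp
  rw [hJa, sub_zero] at this
  rw [← this, Real.log_div (ne_of_gt hb) (ne_of_gt ha)]

lemma m_nonneg {t : ℝ} (ht : 0 ≤ t) : 0 ≤ 1 - (t + 1) * Real.exp (-t) := by
  have h1 := Real.add_one_le_exp t
  have h2 := Real.exp_pos t
  have h3 : Real.exp (-t) = (Real.exp t)⁻¹ := Real.exp_neg t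
  rw [h3, sub_nonneg]
  rw [inv_eq_one_div, mul_one_div, div_le_one h2]
  exact h1

lemma q_hasDeriv (x : ℝ) :
    HasDerivAt (fun x : ℝ => x ^ 2 / 2 - 1 + (x + 1) * Real.exp (-x))
      (x - x * Real.exp (-x)) x := by
  have he : HasDerivAt (fun x : ℝ => Real.exp (-x)) (-Real.exp (-x)) x := by
    have := (Real.hasDerivAt_exp (-x)).comp x ((hasDerivAt_id x).neg)
    refine this.congr_deriv ?_
    simp
  have h1 : HasDerivAt (fun x : ℝ => (x + 1) * Real.exp (-x))
      (Real.exp (-x) + (x + 1) * -Real.exp (-x)) x := by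
    have := ((hasDerivAt_id x).add_const 1).mul he
    refine this.congr_deriv ?_
    simp [id]
  have h2 := (((hasDerivAt_pow 2 x).div_const 2).sub_const 1).add h1
  refine h2.congr_deriv ?_
  simp [id]
  ring

lemma m_le {t : ℝ} (ht : 0 ≤ t) : 1 - (t + 1) * Real.exp (-t) ≤ t ^ 2 / 2 := by
  have h1 : ∀ x ∈ Set.Ici (0:ℝ), 0 ≤ x - x * Real.exp (-x) := by
    intro x hx
    have : Real.exp (-x) ≤ 1 := Real.exp_le_one_iff.mpr (by simpa using hx)
    have hx0 : (0:ℝ) ≤ x := hx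
    nlinarith
  have := mono_aux q_hasDeriv h1 ht
  simp only [ne_eq, OfNat.ofNat_ne_zero, not_false_eq_true, zero_pow, zero_div, zero_add,
    Real.exp_zero, mul_one, neg_zero] at this
  linarith

/-- pointwise form of the difference term -/
lemma Dz_eq {z t : ℝ} (ht : 0 < t) :
    Real.exp (-((z+1)*t))/t - Real.exp (-(z*t))*(1-Real.exp (-t))/t^2
      = -(Real.exp (-(z*t)) * (1 - (t+1) * Real.exp (-t)) / t^2) := by
  have h : Real.exp (-((z+1)*t)) = Real.exp (-(z*t)) * Real.exp (-t) := by
    rw [← Real.exp_add]; ring_nf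
  rw [h]
  field_simp
  ring

lemma Dz_bound {z t : ℝ} (hz : 0 ≤ z) (ht : 0 < t) :
    ‖Real.exp (-((z+1)*t))/t - Real.exp (-(z*t))*(1-Real.exp (-t))/t^2‖
      ≤ min (1/2) (1/t^2) := by
  rw [Dz_eq ht, norm_neg, Real.norm_eq_abs]
  have hm0 := m_nonneg ht.le
  have hm1 := m_le ht.le
  have he : Real.exp (-(z*t)) ≤ 1 := Real.exp_le_one_iff.mpr (by nlinarith)
  have he0 := Real.exp_pos (-(z*t))
  have ht2 : (0:ℝ) < t^2 := by positivity
  rw [abs_of_nonneg (by positivity), le_min_iff]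
  constructor
  · rw [div_le_iff₀ ht2]
    nlinarith
  · rw [div_le_div_iff₀ ht2 ht2]
    have hm2 : 0 ≤ (t + 1) * Real.exp (-t) := by positivity
    have h3 : Real.exp (-(z*t)) * (1 - (t + 1) * Real.exp (-t)) ≤ 1 * 1 :=
      mul_le_mul he (by linarith) (by linarith) zero_le_one
    nlinarith

lemma Dz_contOn (z : ℝ) :
    ContinuousOn (fun t => Real.exp (-((z+1)*t))/t - Real.exp (-(z*t))*(1-Real.exp (-t))/t^2)
      (Ioi (0:ℝ)) := by
  apply ContinuousOn.sub
  · exact (Real.continuous_exp.comp (continuous_const.mul continuous_id).neg).continuousOn.div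
      continuousOn_id (fun t ht => ne_of_gt ht)
  · apply ContinuousOn.div
    · exact ((Real.continuous_exp.comp (continuous_const.mul continuous_id).neg).mul
        (continuous_const.sub (Real.continuous_exp.comp continuous_neg))).continuousOn
    · exact (continuous_pow 2).continuousOn
    · intro t ht
      have ht' : (0:ℝ) < t := ht
      positivity

lemma Dz_integrableOn {z : ℝ} (hz : 0 ≤ z) :
    IntegrableOn
      (fun t => Real.exp (-((z+1)*t))/t - Real.exp (-(z*t))*(1-Real.exp (-t))/t^2)
      (Ioi (0:ℝ)) := by
  have hu : Ioc (0:ℝ) 1 ∪ Ioi 1 = Ioi 0 := Set.Ioc_union_Ioi_eq_Ioi zero_le_one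
  rw [← hu]
  apply MeasureTheory.IntegrableOn.union
  · apply MeasureTheory.Integrable.mono' (g := fun _ => (1:ℝ)/2)
      ((integrableOn_const measure_Ioc_lt_top.ne))
      (((Dz_contOn z).mono Set.Ioc_subset_Ioi_self).aestronglyMeasurable measurableSet_Ioc)
    filter_upwards [ae_restrict_mem measurableSet_Ioc] with t ht
    exact le_trans (Dz_bound hz ht.1) (min_le_left _ _)
  · apply MeasureTheory.Integrable.mono' (g := fun t => t ^ (-2 : ℝ))
      (integrableOn_Ioi_rpow_of_lt (by norm_num) one_pos)
      (((Dz_contOn z).mono (Set.Ioi_subset_Ioi zero_le_one)).aestronglyMeasurable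
        measurableSet_Ioi)
    filter_upwards [ae_restrict_mem measurableSet_Ioi] with t ht
    have ht' : (0:ℝ) < t := lt_trans one_pos ht
    refine le_trans (le_trans (Dz_bound hz ht') (min_le_right _ _)) (le_of_eq ?_)
    rw [Real.rpow_neg ht'.le, ← Real.rpow_natCast t 2]
    norm_num

lemma phi_eq {z t : ℝ} :
    Real.exp (-(z*t)) * (1 - Real.exp (-t)) / t
      = (Real.exp (-(z * t)) - Real.exp (-((z+1) * t))) / t := by
  have h : Real.exp (-((z+1)*t)) = Real.exp (-(z*t)) * Real.exp (-t) := by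
    rw [← Real.exp_add]; ring_nf
  rw [h]
  ring_nf

lemma phi_integrableOn {z : ℝ} (hz : 0 < z) :
    IntegrableOn (fun t => Real.exp (-(z*t)) * (1 - Real.exp (-t)) / t) (Ioi (0:ℝ)) := by
  exact (fru_integrableOn hz (by linarith)).congr_fun (fun t _ => phi_eq.symm) measurableSet_Ioi

lemma phi_integral {z : ℝ} (hz : 0 < z) :
    ∫ t in Ioi (0:ℝ), Real.exp (-(z*t)) * (1 - Real.exp (-t)) / t
      = Real.log (z+1) - Real.log z := by
  rw [setIntegral_congr_fun measurableSet_Ioi (fun t _ => phi_eq)]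
  exact frullani hz (by linarith)

lemma ftc_gen {z : ℝ} (hz : 0 ≤ z) :
    ∫ t in Ioi (0:ℝ),
        (Real.exp (-((z+1)*t))/t - Real.exp (-(z*t))*(1-Real.exp (-t))/t^2
          - z * (Real.exp (-(z*t)) * (1 - Real.exp (-t)) / t)) = -1 := by
  set g : ℝ → ℝ := fun t => Real.exp (-(z*t)) * (1 - Real.exp (-t)) / t with hg
  set f : ℝ → ℝ := fun t => if t = 0 then 1 else Real.exp (-(z*t)) * (1 - Real.exp (-t)) / t
    with hf
  set f' : ℝ → ℝ := fun t =>
    Real.exp (-((z+1)*t))/t - Real.exp (-(z*t))*(1-Real.exp (-t))/t^2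
      - z * (Real.exp (-(z*t)) * (1 - Real.exp (-t)) / t) with hf'
  have hfg : ∀ t : ℝ, t ≠ 0 → f t = g t := by
    intro t ht; simp [hf, hg, ht]
  have hgderiv : ∀ t ∈ Ioi (0:ℝ), HasDerivAt g (f' t) t := by
    intro t ht
    have ht' : (0:ℝ) < t := ht
    have he1 : HasDerivAt (fun u : ℝ => Real.exp (-(z*u))) (-z * Real.exp (-(z*t))) t := by
      have := (Real.hasDerivAt_exp (-(z*t))).comp t (((hasDerivAt_id t).const_mul z).neg)
      refine this.congr_deriv ?_
      simp [id]; ring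
    have he2 : HasDerivAt (fun u : ℝ => 1 - Real.exp (-u)) (Real.exp (-t)) t := by
      have := ((Real.hasDerivAt_exp (-t)).comp t ((hasDerivAt_id t).neg)).const_sub 1
      refine this.congr_deriv ?_
      simp [id]
    have hnum := he1.mul he2
    have hdiv := hnum.div (hasDerivAt_id t) (ne_of_gt ht')
    refine HasDerivAt.congr_deriv hdiv ?_
    have hexp : Real.exp (-((z+1)*t)) = Real.exp (-(z*t)) * Real.exp (-t) := by
      rw [← Real.exp_add]; ring_nf
    rw [hf']
    simp only [id, Pi.mul_apply]
    rw [hexp]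
    field_simp
    ring
  have hderiv : ∀ t ∈ Ioi (0:ℝ), HasDerivAt f (f' t) t := by
    intro t ht
    have ht' : (0:ℝ) < t := ht
    apply (hgderiv t ht).congr_of_eventuallyEq
    filter_upwards [eventually_ne_nhds (ne_of_gt ht')] with u hu
    exact hfg u hu
  have hcont : ContinuousWithinAt f (Ici (0:ℝ)) 0 := by
    rw [← continuousWithinAt_Ioi_iff_Ici]
    have hf0 : f 0 = 1 := by simp [hf]
    unfold ContinuousWithinAt
    rw [hf0]
    have hten : Tendsto g (nhdsWithin 0 (Ioi (0:ℝ))) (nhds 1) := by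
      have t1 : Tendsto (fun t : ℝ => Real.exp (-(z*t))) (nhdsWithin 0 (Ioi (0:ℝ))) (nhds 1) := by
        have : Continuous (fun t : ℝ => Real.exp (-(z*t))) :=
          Real.continuous_exp.comp (continuous_const.mul continuous_id).neg
        have := this.tendsto' 0 1 (by simp)
        exact this.mono_left nhdsWithin_le_nhds
      have t2 : Tendsto (fun t : ℝ => (1 - Real.exp (-t)) / t)
          (nhdsWithin 0 (Ioi (0:ℝ))) (nhds 1) := by
        have hs : HasDerivAt (fun u : ℝ => 1 - Real.exp (-u)) 1 0 := by
          have := ((Real.hasDerivAt_exp (-(0:ℝ))).comp 0 ((hasDerivAt_id (0:ℝ)).neg)).const_sub 1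
          refine this.congr_deriv ?_
          simp
        rw [hasDerivAt_iff_tendsto_slope] at hs
        have := hs.mono_left (nhdsWithin_mono 0 (fun x hx => ne_of_gt hx))
        apply this.congr'
        filter_upwards [self_mem_nhdsWithin] with t ht
        have ht' : (0:ℝ) < t := ht
        rw [slope_def_field]
        simp
      have := t1.mul t2
      rw [mul_one] at this
      apply this.congr'
      filter_upwards [self_mem_nhdsWithin] with t ht
      have ht' : (0:ℝ) < t := ht
      rw [hg]
      field_simp
    apply hten.congr'
    filter_upwards [self_mem_nhdsWithin] with t ht
    exact (hfg t (ne_of_gt ht)).symm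
  have hf'int : IntegrableOn f' (Ioi (0:ℝ)) := by
    apply MeasureTheory.Integrable.sub (Dz_integrableOn hz)
    rcases eq_or_lt_of_le hz with h | h
    · rw [← h]
      simp only [zero_mul, neg_zero, Real.exp_zero, one_mul]
      exact (integrable_zero _ _ _).congr (Filter.Eventually.of_forall fun _ => rfl)
    · exact (phi_integrableOn h).const_mul z
  have htop : Tendsto f atTop (nhds 0) := by
    have h1t : Tendsto (fun t : ℝ => 1/t) atTop (nhds 0) := by
      simpa [one_div] using (tendsto_inv_atTop_zero (𝕜 := ℝ))
    apply tendsto_of_tendsto_of_tendsto_of_le_of_le' tendsto_const_nhds h1t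
    · filter_upwards [eventually_gt_atTop 0] with t ht
      rw [hfg t (ne_of_gt ht)]
      exact div_nonneg (mul_nonneg (Real.exp_pos _).le (one_sub_exp_neg_nonneg ht.le)) ht.le
    · filter_upwards [eventually_gt_atTop 0] with t ht
      rw [hfg t (ne_of_gt ht), hg]
      rw [div_le_div_iff₀ ht ht]
      have e1 : Real.exp (-(z*t)) ≤ 1 := Real.exp_le_one_iff.mpr (by nlinarith)
      have e2 : 1 - Real.exp (-t) ≤ 1 := by
        have := Real.exp_pos (-t); linarith
      have e0 : 0 ≤ 1 - Real.exp (-t) := one_sub_exp_neg_nonneg ht.le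
      have e3 : Real.exp (-(z*t)) * (1 - Real.exp (-t)) ≤ 1 * 1 :=
        mul_le_mul e1 e2 e0 zero_le_one
      nlinarith
  have := integral_Ioi_of_hasDerivAt_of_tendsto hcont hderiv hf'int htop
  rw [this]
  simp [hf]

lemma f'_integrableOn {z : ℝ} (hz : 0 ≤ z) :
    IntegrableOn (fun t =>
      Real.exp (-((z+1)*t))/t - Real.exp (-(z*t))*(1-Real.exp (-t))/t^2
        - z * (Real.exp (-(z*t)) * (1 - Real.exp (-t)) / t)) (Ioi (0:ℝ)) := by
  apply MeasureTheory.Integrable.sub (Dz_integrableOn hz)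
  rcases eq_or_lt_of_le hz with h | h
  · rw [← h]
    simp only [zero_mul, neg_zero, Real.exp_zero, one_mul]
    exact (integrable_zero _ _ _).congr (Filter.Eventually.of_forall fun _ => rfl)
  · exact (phi_integrableOn h).const_mul z

lemma bk_split {z t : ℝ} (ht : 0 < t) :
    bk t * Real.exp (-(z*t)) / t - bk t * Real.exp (-((z+1)*t)) / t
      = (Real.exp (-((z+1)*t))/t - Real.exp (-(z*t))*(1-Real.exp (-t))/t^2
          - z * (Real.exp (-(z*t)) * (1 - Real.exp (-t)) / t))
        + (z + 1/2) * (Real.exp (-(z*t)) * (1 - Real.exp (-t)) / t) := by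
  have h1 := exp_sub_one_pos ht
  have hexp1 : Real.exp (-((z+1)*t)) = Real.exp (-(z*t)) * Real.exp (-t) := by
    rw [← Real.exp_add]; ring_nf
  have hexp2 : Real.exp (-t) = (Real.exp t)⁻¹ := Real.exp_neg t
  rw [bk, hexp1, hexp2]
  have h2 : Real.exp t ≠ 0 := (Real.exp_pos t).ne'
  field_simp
  ring

lemma bkF_rec {z : ℝ} (hz : 0 < z) :
    bkF z - bkF (z+1) = (z + 1/2) * (Real.log (z+1) - Real.log z) - 1 := by
  have hz1 : (0:ℝ) < z + 1 := by linarith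
  rw [bkF, bkF, ← integral_sub (bkF_integrableOn hz) (bkF_integrableOn hz1)]
  rw [setIntegral_congr_fun measurableSet_Ioi (fun t (ht : 0 < t) => bk_split ht)]
  rw [integral_add (f'_integrableOn hz.le) ((phi_integrableOn hz).const_mul _)]
  rw [ftc_gen hz.le, MeasureTheory.integral_const_mul, phi_integral hz]
  ring

noncomputable def hS (z : ℝ) : ℝ := Real.log (Real.Gamma z) - (z - 1/2) * Real.log z + z

lemma hS_rec {z : ℝ} (hz : 0 < z) :
    hS z - hS (z+1) = (z + 1/2) * (Real.log (z+1) - Real.log z) - 1 := by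
  have hgam : Real.Gamma (z+1) = z * Real.Gamma z := Real.Gamma_add_one (ne_of_gt hz)
  rw [hS, hS, hgam, Real.log_mul (ne_of_gt hz) (ne_of_gt (Real.Gamma_pos_of_pos hz))]
  ring

lemma diff_const {z : ℝ} (hz : 0 < z) (n : ℕ) :
    bkF z - hS z = bkF (z + n) - hS (z + n) := by
  induction n with
  | zero => simp
  | succ k ih =>
    have hzk : (0:ℝ) < z + k := by positivity
    have := (bkF_rec hzk).trans (hS_rec hzk).symm
    push_cast
    rw [ih]
    rw [show z + (k + 1 : ℝ) = (z + k) + 1 by ring]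
    linarith

lemma bkF_tendsto (z : ℝ) (hz : 0 < z) :
    Tendsto (fun n : ℕ => bkF (z + n)) atTop (nhds 0) := by
  have h1 : Tendsto (fun n : ℕ => 1 / (z + n)) atTop (nhds 0) := by
    apply Tendsto.comp tendsto_inv_atTop_zero (f := fun n : ℕ => z + n) ?_ |>.congr (by simp [one_div])
    exact tendsto_atTop_add_const_left _ _ tendsto_natCast_atTop_atTop
  apply tendsto_of_tendsto_of_tendsto_of_le_of_le' tendsto_const_nhds h1
  · exact Filter.Eventually.of_forall fun n => bkF_nonneg (by positivity)
  · exact Filter.Eventually.of_forall fun n => bkF_le (by positivity)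

lemma stirling_log :
    Tendsto (fun m : ℕ => Real.log (Nat.factorial m) - (m + 1/2) * Real.log m + m) atTop
      (nhds ((1/2) * Real.log (2*π))) := by
  have hπ : (0:ℝ) < π := Real.pi_pos
  have hsq : Real.sqrt π ≠ 0 := by positivity
  have h1 : Tendsto (fun m : ℕ => Real.log (Stirling.stirlingSeq m)) atTop
      (nhds (Real.log (Real.sqrt π))) :=
    ((Real.continuousAt_log hsq).tendsto).comp Stirling.tendsto_stirlingSeq_sqrt_pi
  have h2 : Tendsto (fun m : ℕ => Real.log (Stirling.stirlingSeq m) + (1/2) * Real.log 2)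
      atTop (nhds (Real.log (Real.sqrt π) + (1/2) * Real.log 2)) :=
    h1.add_const _
  have heq : ∀ᶠ m : ℕ in atTop, Real.log (Stirling.stirlingSeq m) + (1/2) * Real.log 2
      = Real.log (Nat.factorial m) - (m + 1/2) * Real.log m + m := by
    filter_upwards [eventually_ge_atTop 1] with m hm
    have hm0 : (0:ℝ) < m := by exact_mod_cast hm
    have hfac : (0:ℝ) < ((Nat.factorial m : ℕ) : ℝ) := by exact_mod_cast Nat.factorial_pos m
    rw [Stirling.stirlingSeq]
    rw [Real.log_div (ne_of_gt hfac) (by positivity)]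
    rw [Real.log_mul (by positivity) (by positivity)]
    rw [Real.log_sqrt (by positivity), Real.log_pow]
    rw [Real.log_div (ne_of_gt hm0) (Real.exp_ne_zero 1)]
    rw [Real.log_mul two_ne_zero (ne_of_gt hm0), Real.log_exp]
    push_cast
    ring
  have hlim : Real.log (Real.sqrt π) + (1/2) * Real.log 2 = (1/2) * Real.log (2*π) := by
    rw [Real.log_sqrt hπ.le, Real.log_mul two_ne_zero (ne_of_gt hπ)]
    ring
  rw [← hlim]
  exact h2.congr' heq

lemma hS_nat_tendsto :
    Tendsto (fun m : ℕ => hS m) atTop (nhds ((1/2) * Real.log (2*π))) := by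
  rw [← Filter.tendsto_add_atTop_iff_nat 1]
  have key : ∀ᶠ m : ℕ in atTop, hS (m + 1)
      = (Real.log (Nat.factorial m) - (m + 1/2) * Real.log m + m)
        - (m + 1/2) * (Real.log (m+1) - Real.log m) + 1 := by
    filter_upwards [eventually_ge_atTop 1] with m hm
    have hm0 : (0:ℝ) < m := by exact_mod_cast hm
    have hgam : Real.Gamma ((m:ℝ) + 1) = ((Nat.factorial m : ℕ) : ℝ) := Real.Gamma_nat_eq_factorial m
    rw [hS]
    push_cast
    rw [hgam]
    ring
  have h2 : Tendsto (fun m : ℕ => (m + 1/2) * (Real.log (m+1) - Real.log m) - 1) atTop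
      (nhds 0) := by
    have hlog : ∀ᶠ m : ℕ in atTop, (m + 1/2 : ℝ) * (Real.log (m+1) - Real.log m) - 1
        = (m : ℝ) * Real.log (1 + 1/m) + (1/2) * Real.log (1 + 1/m) - 1 := by
      filter_upwards [eventually_ge_atTop 1] with m hm
      have hm0 : (0:ℝ) < m := by exact_mod_cast hm
      have : Real.log ((m:ℝ)+1) - Real.log m = Real.log (1 + 1/m) := by
        rw [← Real.log_div (by positivity) (ne_of_gt hm0)]
        congr 1
        field_simp
      rw [this]
      ring
    have t1 : Tendsto (fun m : ℕ => (m:ℝ) * Real.log (1 + 1/m)) atTop (nhds 1) :=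
      (Real.tendsto_mul_log_one_add_div_atTop 1).comp tendsto_natCast_atTop_atTop
        |>.congr (fun m => by norm_num)
    have t2 : Tendsto (fun m : ℕ => Real.log (1 + 1/(m:ℝ))) atTop (nhds 0) := by
      have : Tendsto (fun m : ℕ => 1 + 1/(m:ℝ)) atTop (nhds 1) := by
        have := (tendsto_inv_atTop_zero (𝕜 := ℝ)).comp tendsto_natCast_atTop_atTop
        simpa [one_div] using this.const_add 1
      have hc : ContinuousAt Real.log 1 := Real.continuousAt_log one_ne_zero
      simpa [Real.log_one, Function.comp_def] using hc.tendsto.comp this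
    have t3 := (t1.add (t2.const_mul (1/2))).sub_const 1
    refine Tendsto.congr' ?_ (by simpa using t3)
    filter_upwards [hlog] with m h
    rw [h]
    norm_num [one_div]
  have h3 := stirling_log.sub h2
  apply Tendsto.congr' _ (by simpa using h3)
  filter_upwards [key] with m hm
  push_cast
  push_cast at hm
  rw [hm]
  ring

lemma hS_tendsto_aux {s : ℝ} (hs0 : 0 ≤ s) (hs1 : s < 1) :
    Tendsto (fun m : ℕ => hS (m + s)) atTop (nhds ((1/2) * Real.log (2*π))) := by
  have hcx := Real.convexOn_log_Gamma
  have hcv := strictConcaveOn_log_Ioi.concaveOn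
  -- upper and lower bounding sequences
  set L := (1/2) * Real.log (2*π) with hL
  have e1 : Tendsto (fun m : ℕ => ((m:ℝ) + s - 1/2) * (Real.log ((m:ℝ)+1) - Real.log m))
      atTop (nhds 1) := by
    have hlog : ∀ᶠ m : ℕ in atTop, ((m:ℝ) + s - 1/2) * (Real.log ((m:ℝ)+1) - Real.log m)
        = (m:ℝ) * Real.log (1 + 1/m) + (s - 1/2) * Real.log (1 + 1/m) := by
      filter_upwards [eventually_ge_atTop 1] with m hm
      have hm0 : (0:ℝ) < m := by exact_mod_cast hm
      have : Real.log ((m:ℝ)+1) - Real.log m = Real.log (1 + 1/m) := by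
        rw [← Real.log_div (by positivity) (ne_of_gt hm0)]
        congr 1
        field_simp
      rw [this]
      ring
    have t1 : Tendsto (fun m : ℕ => (m:ℝ) * Real.log (1 + 1/m)) atTop (nhds 1) :=
      (Real.tendsto_mul_log_one_add_div_atTop 1).comp tendsto_natCast_atTop_atTop
        |>.congr (fun m => by norm_num)
    have t2 : Tendsto (fun m : ℕ => Real.log (1 + 1/(m:ℝ))) atTop (nhds 0) := by
      have h4 : Tendsto (fun m : ℕ => 1 + 1/(m:ℝ)) atTop (nhds 1) := by
        have := (tendsto_inv_atTop_zero (𝕜 := ℝ)).comp tendsto_natCast_atTop_atTop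
        simpa [one_div] using this.const_add 1
      have hc : ContinuousAt Real.log 1 := Real.continuousAt_log one_ne_zero
      simpa [Real.log_one, Function.comp_def] using hc.tendsto.comp h4
    have t3 := t1.add (t2.const_mul (s - 1/2))
    rw [show (1:ℝ) + (s - 1/2) * 0 = 1 by ring] at t3
    refine Tendsto.congr' ?_ t3
    filter_upwards [hlog] with m h
    rw [h]
  have e2 : Tendsto (fun m : ℕ => ((m:ℝ) + s - 1/2) / m) atTop (nhds 1) := by
    have h4 : Tendsto (fun m : ℕ => 1 + (s - 1/2) * (1/(m:ℝ))) atTop (nhds 1) := by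
      have h5 := ((tendsto_inv_atTop_zero (𝕜 := ℝ)).comp
        tendsto_natCast_atTop_atTop).const_mul (s - 1/2)
      have h6 := h5.const_add 1
      simpa [one_div] using h6
    refine Tendsto.congr' ?_ h4
    filter_upwards [eventually_ge_atTop 1] with m hm
    have hm0 : (0:ℝ) < m := by exact_mod_cast hm
    field_simp
    ring
  have e3 : Tendsto (fun m : ℕ => Real.log ((m:ℝ) - 1) - Real.log m) atTop (nhds 0) := by
    have h4 : Tendsto (fun m : ℕ => 1 - 1/(m:ℝ)) atTop (nhds 1) := by
      have := ((tendsto_inv_atTop_zero (𝕜 := ℝ)).comp tendsto_natCast_atTop_atTop).const_mul (-1)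
      have h6 := this.const_add 1
      norm_num at h6
      refine Tendsto.congr' ?_ h6
      filter_upwards [] with m
      push_cast
      ring
    have hc : ContinuousAt Real.log 1 := Real.continuousAt_log one_ne_zero
    have h5 := hc.tendsto.comp h4
    rw [Real.log_one] at h5
    refine Tendsto.congr' ?_ h5
    filter_upwards [eventually_ge_atTop 2] with m hm
    have hm0 : (0:ℝ) < m := by
      have : (1:ℕ) ≤ m := le_trans one_le_two hm
      exact_mod_cast this
    have hm1 : (0:ℝ) < (m:ℝ) - 1 := by
      have : (2:ℝ) ≤ m := by exact_mod_cast hm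
      linarith
    simp only [Function.comp]
    rw [show (1:ℝ) - 1/(m:ℝ) = ((m:ℝ) - 1)/m by field_simp]
    rw [Real.log_div (ne_of_gt hm1) (ne_of_gt hm0)]
  -- limits of the bounding sequences
  have hU : Tendsto (fun m : ℕ => hS m + s
      - s * (((m:ℝ) + s - 1/2) * (Real.log ((m:ℝ)+1) - Real.log m))) atTop (nhds L) := by
    have := hS_nat_tendsto.add ((tendsto_const_nhds (x := s)).sub (e1.const_mul s))
    rw [show L + (s - s * 1) = L by ring] at this
    refine Tendsto.congr' ?_ this
    filter_upwards [] with m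
    ring
  have hLo : Tendsto (fun m : ℕ => hS m + s * (Real.log ((m:ℝ) - 1) - Real.log m) + s
      - s * (((m:ℝ) + s - 1/2) / m)) atTop (nhds L) := by
    have := (hS_nat_tendsto.add (e3.const_mul s)).add
      ((tendsto_const_nhds (x := s)).sub (e2.const_mul s))
    rw [show L + s * 0 + (s - s * 1) = L by ring] at this
    refine Tendsto.congr' ?_ this
    filter_upwards [] with m
    ring
  -- squeeze
  apply tendsto_of_tendsto_of_tendsto_of_le_of_le' hLo hU
  · -- lower bound
    filter_upwards [eventually_ge_atTop 2] with m hm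
    have hm2 : (2:ℝ) ≤ m := by exact_mod_cast hm
    have hm0 : (0:ℝ) < m := by linarith
    have hm1 : (0:ℝ) < (m:ℝ) - 1 := by linarith
    have hms : (0:ℝ) < (m:ℝ) + s := by linarith
    -- Gamma lower bound : logΓ(m+s) ≥ logΓ m + s log(m-1)
    have hγ : Real.log (Real.Gamma ((m:ℝ))) + s * Real.log ((m:ℝ) - 1)
        ≤ Real.log (Real.Gamma ((m:ℝ) + s)) := by
      have hmem1 : ((m:ℝ) - 1) ∈ Ioi (0:ℝ) := hm1
      have hmem2 : ((m:ℝ) + s) ∈ Ioi (0:ℝ) := hms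
      have ha : (0:ℝ) ≤ s / (1 + s) := by positivity
      have hb : (0:ℝ) ≤ 1 / (1 + s) := by positivity
      have hab : s / (1 + s) + 1 / (1 + s) = 1 := by
        rw [← add_div, show s + 1 = 1 + s from add_comm s 1]
        exact div_self (by positivity)
      have hcomb := hcx.2 hmem1 hmem2 ha hb hab
      have h1s : (0:ℝ) < 1 + s := by linarith
      have hpt : s / (1+s) * ((m:ℝ) - 1) + 1 / (1+s) * ((m:ℝ) + s) = (m:ℝ) := by
        field_simp
        ring
      simp only [Function.comp, smul_eq_mul] at hcomb
      rw [hpt] at hcomb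
      -- hcomb : logΓ m ≤ s/(1+s) logΓ(m-1) + 1/(1+s) logΓ(m+s)
      have hΓm : Real.Gamma ((m:ℝ)) = ((m:ℝ) - 1) * Real.Gamma ((m:ℝ) - 1) := by
        have := Real.Gamma_add_one (ne_of_gt hm1)
        rw [sub_add_cancel] at this
        exact this
      have hlogm : Real.log (Real.Gamma ((m:ℝ)))
          = Real.log ((m:ℝ) - 1) + Real.log (Real.Gamma ((m:ℝ) - 1)) := by
        rw [hΓm, Real.log_mul (ne_of_gt hm1) (ne_of_gt (Real.Gamma_pos_of_pos hm1))]
      -- multiply hcomb by (1+s)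
      have := mul_le_mul_of_nonneg_left hcomb (le_of_lt h1s)
      rw [mul_add] at this
      rw [show (1+s) * (s / (1+s) * Real.log (Real.Gamma ((m:ℝ) - 1)))
          = s * Real.log (Real.Gamma ((m:ℝ) - 1)) by field_simp] at this
      rw [show (1+s) * (1 / (1+s) * Real.log (Real.Gamma ((m:ℝ) + s)))
          = Real.log (Real.Gamma ((m:ℝ) + s)) by field_simp] at this
      rw [hlogm] at this ⊢
      nlinarith [this]
    -- log upper bound : log(m+s) ≤ log m + s/m
    have hlog : Real.log ((m:ℝ) + s) ≤ Real.log m + s / m := by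
      have h7 : Real.log ((m:ℝ) + s) - Real.log m = Real.log (((m:ℝ)+s)/m) := by
        rw [Real.log_div (ne_of_gt hms) (ne_of_gt hm0)]
      have h8 : Real.log (((m:ℝ)+s)/m) ≤ ((m:ℝ)+s)/m - 1 :=
        Real.log_le_sub_one_of_pos (by positivity)
      have h9 : ((m:ℝ)+s)/m - 1 = s/m := by field_simp; ring
      linarith [h7, h8, h9]
    -- combine
    rw [hS, hS]
    have hcoef : (0:ℝ) < (m:ℝ) + s - 1/2 := by linarith
    have h10 := mul_le_mul_of_nonneg_left hlog (le_of_lt hcoef)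
    have hexp : ((m:ℝ)+s-1/2) * (Real.log m + s/m)
        = ((m:ℝ)+s-1/2) * Real.log m + s * (((m:ℝ)+s-1/2)/m) := by
      field_simp
    rw [hexp] at h10
    linarith [h10, hγ]
  · -- upper bound
    filter_upwards [eventually_ge_atTop 2] with m hm
    have hm2 : (2:ℝ) ≤ m := by exact_mod_cast hm
    have hm0 : (0:ℝ) < m := by linarith
    have hms : (0:ℝ) < (m:ℝ) + s := by linarith
    have hm1p : (0:ℝ) < (m:ℝ) + 1 := by linarith
    -- Gamma upper bound
    have hγ : Real.log (Real.Gamma ((m:ℝ) + s))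
        ≤ Real.log (Real.Gamma ((m:ℝ))) + s * Real.log m := by
      have hmem1 : ((m:ℝ)) ∈ Ioi (0:ℝ) := hm0
      have hmem2 : ((m:ℝ) + 1) ∈ Ioi (0:ℝ) := hm1p
      have hcomb := hcx.2 hmem1 hmem2 (by linarith : (0:ℝ) ≤ 1 - s) hs0 (by ring)
      simp only [Function.comp, smul_eq_mul] at hcomb
      rw [show (1 - s) * ((m:ℝ)) + s * ((m:ℝ) + 1) = (m:ℝ) + s by ring] at hcomb
      have hΓm : Real.Gamma ((m:ℝ) + 1) = (m:ℝ) * Real.Gamma ((m:ℝ)) :=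
        Real.Gamma_add_one (ne_of_gt hm0)
      have hlogm : Real.log (Real.Gamma ((m:ℝ) + 1))
          = Real.log (m:ℝ) + Real.log (Real.Gamma ((m:ℝ))) := by
        rw [hΓm, Real.log_mul (ne_of_gt hm0) (ne_of_gt (Real.Gamma_pos_of_pos hm0))]
      rw [hlogm] at hcomb
      nlinarith [hcomb]
    -- log lower bound : log(m+s) ≥ log m + s*(log(m+1) - log m)
    have hlog : Real.log m + s * (Real.log ((m:ℝ)+1) - Real.log m) ≤ Real.log ((m:ℝ) + s) := by
      have hmem1 : ((m:ℝ)) ∈ Ioi (0:ℝ) := hm0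
      have hmem2 : ((m:ℝ) + 1) ∈ Ioi (0:ℝ) := hm1p
      have hcomb := hcv.2 hmem1 hmem2 (by linarith : (0:ℝ) ≤ 1 - s) hs0 (by ring)
      simp only [smul_eq_mul] at hcomb
      rw [show (1 - s) * ((m:ℝ)) + s * ((m:ℝ) + 1) = (m:ℝ) + s by ring] at hcomb
      nlinarith [hcomb]
    rw [hS, hS]
    have hcoef : (0:ℝ) < (m:ℝ) + s - 1/2 := by linarith
    have h10 := mul_le_mul_of_nonneg_left hlog (le_of_lt hcoef)
    have hexp : ((m:ℝ)+s-1/2) * (Real.log m + s * (Real.log ((m:ℝ)+1) - Real.log m))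
        = ((m:ℝ)+s-1/2) * Real.log m
          + s * (((m:ℝ)+s-1/2) * (Real.log ((m:ℝ)+1) - Real.log m)) := by
      ring
    rw [hexp] at h10
    linarith [h10, hγ]

lemma binet_formula {z : ℝ} (hz : 0 < z) :
    bkF z = hS z - (1/2) * Real.log (2*π) := by
  set k : ℕ := Nat.floor z with hk
  set s : ℝ := z - k with hs
  have hs0 : 0 ≤ s := by
    rw [hs]
    have := Nat.floor_le hz.le
    linarith
  have hs1 : s < 1 := by
    rw [hs]
    have := Nat.lt_floor_add_one z
    linarith
  have hzks : z = k + s := by rw [hs]; ring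
  have hhS : Tendsto (fun n : ℕ => hS (z + n)) atTop (nhds ((1/2) * Real.log (2*π))) := by
    have hcomp := (hS_tendsto_aux hs0 hs1).comp (tendsto_add_atTop_nat k)
    refine Tendsto.congr' ?_ hcomp
    filter_upwards [] with n
    simp only [Function.comp]
    congr 1
    push_cast
    rw [hzks]
    ring
  have hdiff : Tendsto (fun n : ℕ => bkF (z + n) - hS (z + n)) atTop
      (nhds (0 - (1/2) * Real.log (2*π))) := (bkF_tendsto z hz).sub hhS
  have hconst : Tendsto (fun _ : ℕ => bkF z - hS z) atTop
      (nhds (0 - (1/2) * Real.log (2*π))) := by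
    refine Tendsto.congr' ?_ hdiff
    filter_upwards [] with n
    exact (diff_const hz n).symm
  have := tendsto_nhds_unique hconst tendsto_const_nhds
  linarith [this]

lemma main_split {N x : ℝ} (hN : 0 < N) (hx : 0 < x) :
    Real.exp (-x) / (x * (1 - Real.exp (-(N * x)))) - 1 / (N * x ^ 2)
        + (1 / N - 1 / 2) * Real.exp (-x) / x
      = bk (N*x) * Real.exp (-x) / x
        + (1/N) * (Real.exp (-x)/x - (1 - Real.exp (-x))/x^2) := by
  have hNx : 0 < N * x := by positivity
  have h1 := exp_sub_one_pos hNx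
  have h2 : Real.exp (-(N * x)) = (Real.exp (N * x))⁻¹ := Real.exp_neg _
  have h3 : (1:ℝ) - Real.exp (-(N * x)) = (Real.exp (N * x) - 1) / Real.exp (N * x) := by
    rw [h2]
    field_simp
  rw [bk, h3]
  have h4 : Real.exp (N * x) ≠ 0 := (Real.exp_pos _).ne'
  have h5 : Real.exp (x * N) - 1 ≠ 0 := by rw [mul_comm]; exact h1.ne'
  field_simp
  ring

lemma bkN_integrableOn {N : ℝ} (hN : 0 < N) :
    IntegrableOn (fun x => bk (N*x) * Real.exp (-x) / x) (Ioi (0:ℝ)) := by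
  have hcont : ContinuousOn (fun x => bk (N*x) * Real.exp (-x) / x) (Ioi (0:ℝ)) := by
    apply ContinuousOn.div
    · apply ContinuousOn.mul
      · exact bk_contOn.comp (continuous_const.mul continuous_id).continuousOn
          (fun x hx => by
            have hx' : (0:ℝ) < x := hx
            exact mem_Ioi.mpr (by positivity))
      · exact (Real.continuous_exp.comp continuous_neg).continuousOn
    · exact continuousOn_id
    · exact fun x hx => ne_of_gt hx
  apply MeasureTheory.Integrable.mono'
    (((exp_neg_integrableOn_Ioi 0 one_pos).congr_fun
      (g := fun x => Real.exp (-x)) (fun x _ => by norm_num) measurableSet_Ioi).const_mul N)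
    (hcont.aestronglyMeasurable measurableSet_Ioi)
  filter_upwards [ae_restrict_mem measurableSet_Ioi] with x hx
  have hx' : (0:ℝ) < x := hx
  have hNx : 0 < N * x := by positivity
  have hb0 := bk_nonneg hNx
  have hbl := bk_le hNx
  have he := Real.exp_pos (-x)
  rw [Real.norm_eq_abs, abs_of_nonneg (by positivity), div_le_iff₀ hx']
  nlinarith

lemma D0_integrableOn :
    IntegrableOn (fun x => Real.exp (-x)/x - (1 - Real.exp (-x))/x^2) (Ioi (0:ℝ)) := by
  have := Dz_integrableOn (z := 0) le_rfl
  apply this.congr_fun _ measurableSet_Ioi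
  intro x _
  norm_num

lemma D0_integral :
    ∫ x in Ioi (0:ℝ), (Real.exp (-x)/x - (1 - Real.exp (-x))/x^2) = -1 := by
  have := ftc_gen (z := 0) le_rfl
  rw [← this]
  apply setIntegral_congr_fun measurableSet_Ioi
  intro x _
  norm_num

lemma bkN_integral {N : ℝ} (hN : 0 < N) :
    ∫ x in Ioi (0:ℝ), bk (N*x) * Real.exp (-x) / x = bkF (1/N) := by
  set G : ℝ → ℝ := fun t => bk t * Real.exp (-(1/N * t)) / t with hG
  have hcv := integral_comp_mul_left_Ioi G 0 hN
  rw [mul_zero] at hcv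
  have heq : ∀ x ∈ Ioi (0:ℝ), bk (N*x) * Real.exp (-x) / x = N * G (N * x) := by
    intro x hx
    have hx' : (0:ℝ) < x := hx
    rw [hG]
    simp only
    rw [show 1/N * (N * x) = x by field_simp]
    field_simp
  rw [setIntegral_congr_fun measurableSet_Ioi heq, MeasureTheory.integral_const_mul, hcv]
  rw [smul_eq_mul, ← mul_assoc, mul_inv_cancel₀ (ne_of_gt hN), one_mul]
  rfl

/-- Binet-type integral evaluation: for `N > 0`,
`∫₀^∞ (e^{-x}/(x(1-e^{-Nx})) - 1/(Nx²) + (1/N-1/2)e^{-x}/x) dx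
  = log Γ(1/N) + (1/2-1/N) log(1/N) - (1/2) log(2π)`. -/
theorem binet_integral (N : ℝ) (hN : 0 < N) :
    ∫ x in Set.Ioi (0 : ℝ),
        (Real.exp (-x) / (x * (1 - Real.exp (-(N * x)))) - 1 / (N * x ^ 2)
          + (1 / N - 1 / 2) * Real.exp (-x) / x)
      = Real.log (Real.Gamma (1 / N)) + (1 / 2 - 1 / N) * Real.log (1 / N)
        - 1 / 2 * Real.log (2 * π) := by
  have hNi : 0 < 1/N := by positivity
  rw [setIntegral_congr_fun measurableSet_Ioi
    (fun x (hx : x ∈ Ioi (0:ℝ)) => main_split hN hx)]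
  rw [integral_add (bkN_integrableOn hN) (D0_integrableOn.const_mul (1/N))]
  rw [bkN_integral hN, MeasureTheory.integral_const_mul, D0_integral]
  rw [binet_formula hNi, hS]
  ring
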